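/- Let T be a weakly pseudo-right-unitary subsemigroup of a semigroup S, with choices of generators σ : X⁺ → T and τ : Y⁺ → S such that X ⊆ Y and σ is the restriction of τ. Then L_σ(T) = L_τ(S) ∩ (X ∪ X̄)*. -/

import Mathlib

/-- Right action of a semigroup element on the carrier of `A¹` (the semigroup
`A` with identity `none` adjoined), where the semigroup multiplication on `A`
is given by `f`. -/
def act {A : Type*} (f : A → A → A) : Option A → A → Option A
  | none, s => some s
  | some t, s => some (f t s)

/-- One edge of the loop automaton of the semigroup with carrier `A`,
multiplication `f` and generators `σ : X → A`: vertices are elements of `A¹`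
(with `none` the adjoined identity `1`), with a positive edge `p →ˣ p·σ(x)`
and its reverse labelled `x̄`. -/
def sstep {A X : Type*} (f : A → A → A) (σ : X → A) (p : Option A) :
    X ⊕ X → Option A → Prop
  | Sum.inl x, q => act f p (σ x) = q
  | Sum.inr x, q => act f q (σ x) = p

/-- `spathIn f σ V p w q` holds iff `w` labels a path from `p` to `q` in the
loop automaton of the semigroup `(A, f)` with generators `σ`, all of whose
intermediate vertices lie in the vertex set `V`. -/
def spathIn {A X : Type*} (f : A → A → A) (σ : X → A) (V : Set (Option A)) :
    Option A → List (X ⊕ X) → Option A → Prop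
  | p, [], q => p = q
  | p, a :: w, q => ∃ r ∈ V, sstep f σ p a r ∧ spathIn f σ V r w q

/-- Let `T` be a weakly pseudo-right-unitary subsemigroup of a semigroup `S`,
with generators `τ : Y⁺ → S` restricting on `X ⊆ Y` to generators
`σ = τ|_X : X⁺ → T` of `T`. Then `L_σ(T) = L_τ(S) ∩ (X ∪ X̄)*`: the loop
problem of `T` (loops at `1` in the loop automaton of `T`, i.e. paths whose
vertices lie in `T ∪ {1}`, labelled over `X ∪ X̄`) equals the set of words of
`L_τ(S)` over the subalphabet `X ∪ X̄`. -/
theorem loopProblem_weakly_pru_subsemigroup {S Y : Type*} [Semigroup S]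
    (T : Set S) (X : Set Y) (τ : Y → S)
    (hsub : ∀ a ∈ T, ∀ b ∈ T, a * b ∈ T)
    (hwpru : ∀ (a : S), ∀ x ∈ T, ∀ y ∈ T, a * x ∈ T →
      ∃ b ∈ T, a * x = b * x ∧ a * y = b * y)
    (hXT : ∀ y ∈ X, τ y ∈ T)
    (hgenT : ∀ t ∈ T, ∃ u : List Y, (∀ y ∈ u, y ∈ X) ∧
      ((u.map τ).foldl (act (· * ·)) none = some t))
    (hgenS : ∀ s : S, ∃ u : List Y,
      (u.map τ).foldl (act (· * ·)) none = some s) :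
    {w : List (Y ⊕ Y) |
        spathIn (· * ·) τ ({none} ∪ {p | ∃ t ∈ T, p = some t}) none w none ∧
        ∀ a ∈ w, Sum.elim (· ∈ X) (· ∈ X) a} =
      {w : List (Y ⊕ Y) | spathIn (· * ·) τ Set.univ none w none} ∩
        {w | ∀ a ∈ w, Sum.elim (· ∈ X) (· ∈ X) a} := by
    classical
  set V : Set (Option S) := {none} ∪ {p | ∃ t ∈ T, p = some t} with hV
  have memV : ∀ t : S, t ∈ T → (some t : Option S) ∈ V := fun t ht => Or.inr ⟨t, ht, rfl⟩
  have noneV : (none : Option S) ∈ V := Or.inl rfl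
  have mono : ∀ (w : List (Y ⊕ Y)) (p q : Option S),
      spathIn (· * ·) τ V p w q → spathIn (· * ·) τ Set.univ p w q := by
    intro w
    induction w with
    | nil => exact fun p q h => h
    | cons a w ih =>
      rintro p q ⟨r, -, hs, hp⟩
      exact ⟨r, trivial, hs, ih r q hp⟩
  have key : ∀ w : List (Y ⊕ Y), (∀ a ∈ w, Sum.elim (· ∈ X) (· ∈ X) a) →
      ((spathIn (· * ·) τ Set.univ none w none → spathIn (· * ·) τ V none w none) ∧
        ∀ (c : S) (m : Option S), (∀ m₀ ∈ m, m₀ ∈ T) →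
          spathIn (· * ·) τ Set.univ (some (m.elim c (fun m₀ => c * m₀))) w none →
          ∀ y ∈ T, ∃ b ∈ T, b * y = c * y ∧
            spathIn (· * ·) τ V (some (m.elim b (fun m₀ => b * m₀))) w none ∧
            (m.elim c (fun m₀ => c * m₀) ∈ T →
              spathIn (· * ·) τ V (some (m.elim c (fun m₀ => c * m₀))) w none)) := by
    intro w
    induction w with
    | nil =>
      intro _
      refine ⟨fun h => h, ?_⟩
      intro c m _ h y hy
      exact absurd h (by simp [spathIn])
    | cons a w ih =>
      intro hw
      have hwx : ∀ a ∈ w, Sum.elim (· ∈ X) (· ∈ X) a :=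
        fun a ha => hw a (List.mem_cons_of_mem _ ha)
      obtain ⟨ihM, ihD⟩ := ih hwx
      have haX := hw a List.mem_cons_self
      cases a with
      | inl x =>
        have hx : x ∈ X := haX
        have hτx : τ x ∈ T := hXT x hx
        constructor
        · rintro ⟨r, -, hs, hp⟩
          simp only [sstep, act] at hs
          subst hs
          obtain ⟨b, hbT, -, -, hcond⟩ := ihD (τ x) none (by simp) hp (τ x) hτx
          exact ⟨some (τ x), memV _ hτx, by simp [sstep, act], hcond hτx⟩
        · intro c m hm h y hy
          obtain ⟨r, -, hs, hp⟩ := h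
          simp only [sstep, act] at hs
          subst hs
          cases m with
          | none =>
            obtain ⟨b, hbT, hby, hpath, hcond⟩ :=
              ihD c (some (τ x)) (by simpa using hτx) hp y hy
            refine ⟨b, hbT, hby, ?_, ?_⟩
            · exact ⟨some (b * τ x), memV _ (hsub b hbT _ hτx),
                by simp [sstep, act], hpath⟩
            · intro hc
              exact ⟨some (c * τ x), memV _ (hsub c hc _ hτx),
                by simp [sstep, act], hcond (hsub c hc _ hτx)⟩
          | some m₀ =>
            have hm₀ : m₀ ∈ T := hm m₀ rfl
            have hm' : m₀ * τ x ∈ T := hsub m₀ hm₀ _ hτx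
            have hp' : spathIn (· * ·) τ Set.univ
                (some ((some (m₀ * τ x)).elim c (fun z => c * z))) w none := by
              simpa [mul_assoc] using hp
            obtain ⟨b, hbT, hby, hpath, hcond⟩ :=
              ihD c (some (m₀ * τ x)) (by simpa using hm') hp' y hy
            refine ⟨b, hbT, hby, ?_, ?_⟩
            · refine ⟨some (b * (m₀ * τ x)), memV _ (hsub b hbT _ hm'),
                by simp [sstep, act, mul_assoc], ?_⟩
              simpa using hpath
            · intro hc
              have hc' : c * (m₀ * τ x) ∈ T := by
                rw [← mul_assoc]; exact hsub _ (by simpa using hc) _ hτx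
              refine ⟨some (c * (m₀ * τ x)), memV _ hc',
                by simp [sstep, act, mul_assoc], ?_⟩
              simpa using hcond hc'
      | inr x =>
        have hx : x ∈ X := haX
        have hτx : τ x ∈ T := hXT x hx
        constructor
        · rintro ⟨r, -, hs, hp⟩
          cases r <;> simp [sstep, act] at hs
        · intro c m hm h y hy
          obtain ⟨r, -, hs, hp⟩ := h
          cases r with
          | none =>
            simp only [sstep, act, Option.some.injEq] at hs
            cases m with
            | none =>
              have hc : τ x = c := hs
              refine ⟨c, hc ▸ hτx, rfl, ?_, fun _ => ?_⟩ <;>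
                exact ⟨none, noneV, by simp [sstep, act, hc], ihM hp⟩
            | some m₀ =>
              have hc : τ x = c * m₀ := hs
              obtain ⟨b, hbT, hbm, hby⟩ :=
                hwpru c m₀ (hm m₀ rfl) y hy (hc ▸ hτx)
              refine ⟨b, hbT, hby.symm, ?_, fun _ => ?_⟩
              · exact ⟨none, noneV, by simp [sstep, act, ← hbm, ← hc], ihM hp⟩
              · exact ⟨none, noneV, by simp [sstep, act, ← hc], ihM hp⟩
          | some d =>
            simp only [sstep, act, Option.some.injEq] at hs
            obtain ⟨b', hb'T, hb'x, hpath', -⟩ :=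
              ihD d none (by simp) hp (τ x) hτx
            have hb'd : b' * τ x = m.elim c (fun m₀ => c * m₀) := hb'x.trans hs
            have hb'xT : b' * τ x ∈ T := hsub b' hb'T _ hτx
            cases m with
            | none =>
              have hb'd' : b' * τ x = c := by simpa using hb'd
              have hcT : c ∈ T := hb'd' ▸ hb'xT
              refine ⟨c, hcT, rfl, ?_, fun _ => ?_⟩ <;>
                exact ⟨some b', memV b' hb'T,
                  by simp [sstep, act, hb'd], hpath'⟩
            | some m₀ =>
              have hb'd' : b' * τ x = c * m₀ := by simpa using hb'd
              have hcm : c * m₀ ∈ T := hb'd' ▸ hb'xT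
              obtain ⟨b, hbT, hbm, hby⟩ := hwpru c m₀ (hm m₀ rfl) y hy hcm
              refine ⟨b, hbT, hby.symm, ?_, fun _ => ?_⟩
              · exact ⟨some b', memV b' hb'T,
                  by simp [sstep, act, hb'd, hbm], hpath'⟩
              · exact ⟨some b', memV b' hb'T,
                  by simp [sstep, act, hb'd], hpath'⟩
  ext w
  simp only [Set.mem_setOf_eq, Set.mem_inter_iff]
  constructor
  · rintro ⟨h1, h2⟩
    exact ⟨mono w none none h1, h2⟩
  · rintro ⟨h1, h2⟩
    exact ⟨(key w h2).1 h1, h2⟩
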